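/- (Theorem 3, randomization at level 4) Let π ∈ (0,1) and let ρc, ρt be nonzero real numbers. Let Xc be the MKL×2 matrix whose first column is 1_{MKL} and whose second column is the zero vector, and let Xt be the MKL×2 matrix whose both columns equal 1_{MKL}. Define the 2×2 matrices M1 = π ρc^{−2} Xcᵀ Xc + (1−π) ρt^{−2} Xtᵀ Xt and M0 = π ρc^{−2} Xcᵀ R Xc + (1−π) ρt^{−2} Xtᵀ R Xt. Then M1 is invertible and the lower-right entry of the sandwich matrix M1^{−1} M0 M1^{−1} equals (λ4/(MKL)) · (ρc²/π + ρt²/(1−π)); that is, the GEE sandwich variance under an independence working correlation coincides with the model-based variance under the true extended nested exchangeable correlation. -/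

import Mathlib

open Matrix Polynomial Finset

noncomputable section

/-- Extended nested exchangeable correlation matrix: the ((j,k,l),(j',k',l')) entry equals
1 if (j,k,l)=(j',k',l'), `a0` if j=j', k=k', l≠l', `a1` if j=j', k≠k', and `a2` if j≠j'. -/
def Rmat (M K L : ℕ) (a0 a1 a2 : ℝ) :
    Matrix (Fin M × Fin K × Fin L) (Fin M × Fin K × Fin L) ℝ :=
  Matrix.of fun p q =>
    if p = q then 1
    else if p.1 = q.1 ∧ p.2.1 = q.2.1 then a0
    else if p.1 = q.1 then a1
    else a2

def lam1 (a0 : ℝ) : ℝ := 1 - a0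

def lam2 (L : ℕ) (a0 a1 : ℝ) : ℝ := 1 + ((L : ℝ) - 1) * a0 - (L : ℝ) * a1

def lam3 (K L : ℕ) (a0 a1 a2 : ℝ) : ℝ :=
  1 + ((L : ℝ) - 1) * a0 + (L : ℝ) * ((K : ℝ) - 1) * a1 - (L : ℝ) * (K : ℝ) * a2

def lam4 (M K L : ℕ) (a0 a1 a2 : ℝ) : ℝ :=
  1 + ((L : ℝ) - 1) * a0 + (L : ℝ) * ((K : ℝ) - 1) * a1
    + (L : ℝ) * (K : ℝ) * ((M : ℝ) - 1) * a2

lemma rowsum_Rmat (M K L : ℕ) (a0 a1 a2 : ℝ) (p : Fin M × Fin K × Fin L) :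
    ∑ q : Fin M × Fin K × Fin L, Rmat M K L a0 a1 a2 p q = lam4 M K L a0 a1 a2 := by
  have key : ∀ q : Fin M × Fin K × Fin L,
      Rmat M K L a0 a1 a2 p q
      = (1-a0) * (if q = p then 1 else 0)
        + (a0-a1) * (if q.1 = p.1 ∧ q.2.1 = p.2.1 then 1 else 0)
        + (a1-a2) * (if q.1 = p.1 then 1 else 0) + a2 := by
    intro q
    show (if p = q then (1:ℝ) else if p.1 = q.1 ∧ p.2.1 = q.2.1 then a0
        else if p.1 = q.1 then a1 else a2) = _
    rcases eq_or_ne p q with h1 | h1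
    · subst h1; simp
    · have h1' : q ≠ p := h1.symm
      rcases eq_or_ne p.1 q.1 with h2 | h2
      · rcases eq_or_ne p.2.1 q.2.1 with h3 | h3
        · rw [if_neg h1, if_pos ⟨h2, h3⟩, if_neg h1',
            if_pos ⟨h2.symm, h3.symm⟩, if_pos h2.symm]; ring
        · have hc : ¬(p.1 = q.1 ∧ p.2.1 = q.2.1) := fun h => h3 h.2
          have hc' : ¬(q.1 = p.1 ∧ q.2.1 = p.2.1) := fun h => h3 h.2.symm
          rw [if_neg h1, if_neg hc, if_pos h2, if_neg h1', if_neg hc', if_pos h2.symm]; ring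
      · have hc : ¬(p.1 = q.1 ∧ p.2.1 = q.2.1) := fun h => h2 h.1
        have hc' : ¬(q.1 = p.1 ∧ q.2.1 = p.2.1) := fun h => h2 h.1.symm
        have hc2 : ¬(q.1 = p.1) := fun h => h2 h.symm
        rw [if_neg h1, if_neg hc, if_neg h2, if_neg h1', if_neg hc', if_neg hc2]; ring
  simp only [key]
  rw [Finset.sum_add_distrib, Finset.sum_add_distrib, Finset.sum_add_distrib,
    ← Finset.mul_sum, ← Finset.mul_sum, ← Finset.mul_sum]
  have c1 : ∑ q : Fin M × Fin K × Fin L, (if q = p then (1:ℝ) else 0) = 1 := by simp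
  have c2 : ∑ q : Fin M × Fin K × Fin L,
      (if q.1 = p.1 ∧ q.2.1 = p.2.1 then (1:ℝ) else 0) = (L:ℝ) := by
    rw [Fintype.sum_prod_type]
    simp [Fintype.sum_prod_type, ite_and, Finset.sum_ite_eq', apply_ite Finset.card]
  have c3 : ∑ q : Fin M × Fin K × Fin L, (if q.1 = p.1 then (1:ℝ) else 0) = (K:ℝ)*(L:ℝ) := by
    rw [Fintype.sum_prod_type]
    simp [Fintype.sum_prod_type, Finset.sum_ite_eq', apply_ite Finset.card]
  rw [c1, c2, c3]
  simp [Finset.sum_const, Fintype.card_prod, lam4]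
  ring

/-- Theorem 3, randomization at level 4: the independence-working-correlation
sandwich variance coincides with the model-based variance under the true correlation. -/
theorem sandwich_variance_level4 (M K L : ℕ) (hM : 2 ≤ M) (hK : 2 ≤ K) (hL : 2 ≤ L)
    (a0 a1 a2 : ℝ) (π ρc ρt : ℝ)
    (hπ : π ∈ Set.Ioo (0 : ℝ) 1) (hρc : ρc ≠ 0) (hρt : ρt ≠ 0)
    (Xc Xt : Matrix (Fin M × Fin K × Fin L) (Fin 2) ℝ)
    (hXc : Xc = Matrix.of fun _ i => if i = 0 then 1 else 0)
    (hXt : Xt = Matrix.of fun _ _ => 1)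
    (M1 M0 : Matrix (Fin 2) (Fin 2) ℝ)
    (hM1 : M1 = (π * (ρc ^ 2)⁻¹) • (Xcᵀ * Xc) + ((1 - π) * (ρt ^ 2)⁻¹) • (Xtᵀ * Xt))
    (hM0 : M0 = (π * (ρc ^ 2)⁻¹) • (Xcᵀ * Rmat M K L a0 a1 a2 * Xc)
        + ((1 - π) * (ρt ^ 2)⁻¹) • (Xtᵀ * Rmat M K L a0 a1 a2 * Xt)) :
    IsUnit M1 ∧
    (M1⁻¹ * M0 * M1⁻¹) 1 1 = lam4 M K L a0 a1 a2 / ((M : ℝ) * (K : ℝ) * (L : ℝ)) *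
      (ρc ^ 2 / π + ρt ^ 2 / (1 - π)) := by
  obtain ⟨hπ0, hπ1⟩ := hπ
  have hπ1' : (0:ℝ) < 1 - π := by linarith
  set n : ℝ := (M : ℝ) * (K : ℝ) * (L : ℝ) with hn
  have hn0 : 0 < n := by
    have : (0:ℝ) < M := by exact_mod_cast Nat.lt_of_lt_of_le two_pos hM
    have : (0:ℝ) < K := by exact_mod_cast Nat.lt_of_lt_of_le two_pos hK
    have : (0:ℝ) < L := by exact_mod_cast Nat.lt_of_lt_of_le two_pos hL
    positivity
  set a : ℝ := π * (ρc ^ 2)⁻¹ with ha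
  set b : ℝ := (1 - π) * (ρt ^ 2)⁻¹ with hb
  have ha0 : 0 < a := by positivity
  have hb0 : 0 < b := by positivity
  set lam : ℝ := lam4 M K L a0 a1 a2 with hlam
  have hcard : (Fintype.card (Fin M × Fin K × Fin L) : ℝ) = n := by
    simp [Fintype.card_prod, hn]; ring
  have hRXc : Rmat M K L a0 a1 a2 * Xc = lam • Xc := by
    ext p j
    by_cases hj : j = 0
    · simp [Matrix.mul_apply, hXc, hj, rowsum_Rmat, hlam]
    · simp [Matrix.mul_apply, hXc, hj]
  have hRXt : Rmat M K L a0 a1 a2 * Xt = lam • Xt := by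
    ext p j
    simp [Matrix.mul_apply, hXt, rowsum_Rmat M K L a0 a1 a2 p, hlam]
  have hM0' : M0 = lam • M1 := by
    rw [hM0, hM1, Matrix.mul_assoc, Matrix.mul_assoc, hRXc, hRXt,
      Matrix.mul_smul, Matrix.mul_smul, smul_add, smul_comm a lam, smul_comm b lam]
  have hM1' : M1 = !![n*(a+b), n*b; n*b, n*b] := by
    rw [hM1]
    ext i j
    fin_cases i <;> fin_cases j <;>
      simp [Matrix.mul_apply, hXc, hXt, Finset.sum_const, hcard,
        hn] <;> ring_nf
  have hdet : M1.det = n^2 * a * b := by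
    rw [hM1', Matrix.det_fin_two_of]; ring
  have hdet0 : M1.det ≠ 0 := by rw [hdet]; positivity
  have hU : IsUnit M1 := by
    rw [Matrix.isUnit_iff_isUnit_det]; exact isUnit_iff_ne_zero.mpr hdet0
  refine ⟨hU, ?_⟩
  have hinv : M1⁻¹ * M0 * M1⁻¹ = lam • M1⁻¹ := by
    rw [hM0', Matrix.mul_smul, Matrix.smul_mul, Matrix.nonsing_inv_mul M1
      (isUnit_iff_ne_zero.mpr hdet0), Matrix.one_mul]
  have hentry : M1⁻¹ 1 1 = (n^2 * a * b)⁻¹ * (n * (a+b)) := by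
    rw [Matrix.inv_def, Ring.inverse_eq_inv', hdet]
    rw [hM1', Matrix.adjugate_fin_two_of]
    simp
  rw [hinv]
  simp only [Matrix.smul_apply, smul_eq_mul, hentry]
  rw [hlam, ha, hb]
  have hπ1'' : (1:ℝ) - π ≠ 0 := ne_of_gt hπ1'
  field_simp
  ring
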